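/- Let ξ > 0 and define the shifted lattice Λ′ := {(2a+1)ξ + (2b+1)ξ·i : a, b ∈ ℤ} ⊂ ℂ. Let K ⊆ ℂ be a connected, unbounded set and let q ∈ K. Then there exists a sequence (z_k)_{k ∈ ℕ} of pairwise distinct points of Λ′ such that: |z₀ − q| ≤ 2ξ; z_{k+1} − z_k ∈ {2ξ, −2ξ, 2ξ·i, −2ξ·i} for every k (so consecutive points are nearest neighbors of the lattice Λ′); for every k the closed square z_k + [−ξ, ξ] + i·[−ξ, ξ] intersects K; and |z_k| → ∞ as k → ∞. -/

import Mathlib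

open Filter

namespace LatticeShadow

abbrev V := ℤ × ℤ

noncomputable def ctr (ξ : ℝ) (c : V) : ℂ :=
  (((2 * ((c.1 : ℤ) : ℝ) + 1) * ξ : ℝ) : ℂ) + (((2 * ((c.2 : ℤ) : ℝ) + 1) * ξ : ℝ) : ℂ) * Complex.I

def InSq (ξ : ℝ) (x : ℂ) (c : V) : Prop :=
  |x.re - (2 * (c.1 : ℝ) + 1) * ξ| ≤ ξ ∧ |x.im - (2 * (c.2 : ℝ) + 1) * ξ| ≤ ξ

def Good (ξ : ℝ) (K : Set ℂ) (c : V) : Prop := ∃ w ∈ K, InSq ξ w c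

def Adj (ξ : ℝ) (K : Set ℂ) (c d : V) : Prop :=
  Good ξ K c ∧ Good ξ K d ∧ |c.1 - d.1| + |c.2 - d.2| = 1

lemma ctr_re (ξ : ℝ) (c : V) : (ctr ξ c).re = (2 * (c.1 : ℝ) + 1) * ξ := by
  simp [ctr]

lemma ctr_im (ξ : ℝ) (c : V) : (ctr ξ c).im = (2 * (c.2 : ℝ) + 1) * ξ := by
  simp [ctr]

lemma oneD {ξ : ℝ} (hξ : 0 < ξ) (u : ℝ) (a : ℤ) :
    |u - (2 * (a : ℝ) + 1) * ξ| ≤ ξ ↔ ((a : ℝ) ≤ u / (2 * ξ) ∧ u / (2 * ξ) ≤ a + 1) := by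
  rw [abs_le, le_div_iff₀ (by linarith), div_le_iff₀ (by linarith)]
  constructor <;> rintro ⟨h1, h2⟩ <;> constructor <;> nlinarith

lemma inSq_iff {ξ : ℝ} (hξ : 0 < ξ) (x : ℂ) (c : V) :
    InSq ξ x c ↔ (((c.1 : ℝ) ≤ x.re / (2 * ξ) ∧ x.re / (2 * ξ) ≤ c.1 + 1) ∧
      ((c.2 : ℝ) ≤ x.im / (2 * ξ) ∧ x.im / (2 * ξ) ≤ c.2 + 1)) := by
  unfold InSq
  rw [oneD hξ, oneD hξ]

/-- distance from `t` to the nearest *other* integerish breakpoint -/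
noncomputable def eps (t : ℝ) : ℝ :=
  if Int.fract t = 0 then 1 else min (Int.fract t) (1 - Int.fract t)

lemma eps_pos (t : ℝ) : 0 < eps t := by
  unfold eps
  split_ifs with h
  · norm_num
  · have h1 := Int.fract_nonneg t
    have h2 := Int.fract_lt_one t
    exact lt_min (lt_of_le_of_ne h1 (Ne.symm h)) (by linarith)

lemma keyInt (a : ℤ) (t t' : ℝ) (h : |t' - t| < eps t)
    (h1 : (a : ℝ) ≤ t') (h2 : t' ≤ a + 1) : (a : ℝ) ≤ t ∧ t ≤ a + 1 := by
  have hfl : ((⌊t⌋ : ℤ) : ℝ) = t - Int.fract t := by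
    rw [Int.self_sub_fract]
  have habs := abs_lt.1 h
  by_cases hz : Int.fract t = 0
  · have ht : t = (⌊t⌋ : ℝ) := by rw [hfl, hz]; ring
    have heps : eps t = 1 := by rw [eps, if_pos hz]
    rw [heps] at habs
    constructor
    · by_contra hc
      push_neg at hc
      have hfa : ⌊t⌋ < a := by rw [Int.floor_lt]; exact hc
      have : (⌊t⌋ : ℝ) + 1 ≤ (a : ℝ) := by exact_mod_cast hfa
      linarith [habs.1]
    · by_contra hc
      push_neg at hc
      have hfa : a + 1 ≤ ⌊t⌋ := by rw [Int.le_floor]; push_cast; linarith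
      have hfa2 : a + 1 < ⌊t⌋ ∨ a + 1 = ⌊t⌋ := by omega
      rcases hfa2 with hlt | heq
      · have : ((a : ℝ) + 1) + 1 ≤ (⌊t⌋ : ℝ) := by exact_mod_cast hlt
        linarith [habs.2]
      · have : ((a : ℝ) + 1) = (⌊t⌋ : ℝ) := by exact_mod_cast heq
        rw [ht] at hc; linarith
  · have heps : eps t = min (Int.fract t) (1 - Int.fract t) := by rw [eps, if_neg hz]
    rw [heps] at habs
    have hml := min_le_left (Int.fract t) (1 - Int.fract t)
    have hmr := min_le_right (Int.fract t) (1 - Int.fract t)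
    constructor
    · by_contra hc
      push_neg at hc
      have hfa : ⌊t⌋ < a := by rw [Int.floor_lt]; exact hc
      have : (⌊t⌋ : ℝ) + 1 ≤ (a : ℝ) := by exact_mod_cast hfa
      linarith [habs.1]
    · by_contra hc
      push_neg at hc
      have hfa : a + 1 ≤ ⌊t⌋ := by rw [Int.le_floor]; push_cast; linarith
      have : ((a : ℝ) + 1) ≤ (⌊t⌋ : ℝ) := by exact_mod_cast hfa
      linarith [habs.2]

noncomputable def del (ξ : ℝ) (x : ℂ) : ℝ :=
  (2 * ξ) * min (eps (x.re / (2 * ξ))) (eps (x.im / (2 * ξ)))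

lemma del_pos {ξ : ℝ} (hξ : 0 < ξ) (x : ℂ) : 0 < del ξ x :=
  mul_pos (by linarith) (lt_min (eps_pos _) (eps_pos _))

lemma close_inSq {ξ : ℝ} (hξ : 0 < ξ) (x y : ℂ) (h : dist y x < del ξ x)
    (c : V) (hc : InSq ξ y c) : InSq ξ x c := by
  have h2ξ : (0:ℝ) < 2 * ξ := by linarith
  have hre : |y.re / (2*ξ) - x.re / (2*ξ)| < eps (x.re / (2*ξ)) := by
    rw [div_sub_div_same, abs_div, abs_of_pos h2ξ, div_lt_iff₀ h2ξ]
    calc |y.re - x.re| = |(y - x).re| := by rw [Complex.sub_re]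
    _ ≤ ‖y - x‖ := Complex.abs_re_le_norm _
    _ = dist y x := (Complex.dist_eq y x).symm
    _ < del ξ x := h
    _ ≤ eps (x.re / (2*ξ)) * (2*ξ) := by
        rw [del, mul_comm]
        exact mul_le_mul_of_nonneg_right (min_le_left _ _) (by linarith)
  have him : |y.im / (2*ξ) - x.im / (2*ξ)| < eps (x.im / (2*ξ)) := by
    rw [div_sub_div_same, abs_div, abs_of_pos h2ξ, div_lt_iff₀ h2ξ]
    calc |y.im - x.im| = |(y - x).im| := by rw [Complex.sub_im]
    _ ≤ ‖y - x‖ := Complex.abs_im_le_norm _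
    _ = dist y x := (Complex.dist_eq y x).symm
    _ < del ξ x := h
    _ ≤ eps (x.im / (2*ξ)) * (2*ξ) := by
        rw [del, mul_comm]
        exact mul_le_mul_of_nonneg_right (min_le_right _ _) (by linarith)
  rw [inSq_iff hξ] at hc ⊢
  exact ⟨keyInt _ _ _ hre hc.1.1 hc.1.2, keyInt _ _ _ him hc.2.1 hc.2.2⟩

noncomputable def cellOf (ξ : ℝ) (x : ℂ) : V := (⌊x.re / (2 * ξ)⌋, ⌊x.im / (2 * ξ)⌋)

lemma inSq_cellOf {ξ : ℝ} (hξ : 0 < ξ) (x : ℂ) : InSq ξ x (cellOf ξ x) := by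
  rw [inSq_iff hξ]
  exact ⟨⟨Int.floor_le _, (Int.lt_floor_add_one _).le⟩,
    ⟨Int.floor_le _, (Int.lt_floor_add_one _).le⟩⟩

lemma step_reach {ξ : ℝ} {K : Set ℂ} {c d : V} (h1 : Good ξ K c) (h2 : Good ξ K d)
    (h : |c.1 - d.1| + |c.2 - d.2| ≤ 1) : Relation.ReflTransGen (Adj ξ K) c d := by
  have hm := abs_nonneg (c.1 - d.1)
  have hn := abs_nonneg (c.2 - d.2)
  rcases (by omega : (|c.1 - d.1| = 0 ∧ |c.2 - d.2| = 0) ∨ |c.1 - d.1| + |c.2 - d.2| = 1) with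
    ⟨ha, hb⟩ | hone
  · have : c = d := by
      have h1' := sub_eq_zero.1 (abs_eq_zero.1 ha)
      have h2' := sub_eq_zero.1 (abs_eq_zero.1 hb)
      exact Prod.ext h1' h2'
    rw [this]
  · exact Relation.ReflTransGen.single ⟨h1, h2, hone⟩

lemma mutual_reach {ξ : ℝ} (hξ : 0 < ξ) {K : Set ℂ} {x : ℂ} (hx : x ∈ K) (c c' : V)
    (hc : InSq ξ x c) (hc' : InSq ξ x c') : Relation.ReflTransGen (Adj ξ K) c c' := by
  set m : V := (c'.1, c.2) with hm
  have hcm : InSq ξ x m := by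
    rw [inSq_iff hξ] at hc hc' ⊢
    exact ⟨hc'.1, hc.2⟩
  have hGc : Good ξ K c := ⟨x, hx, hc⟩
  have hGc' : Good ξ K c' := ⟨x, hx, hc'⟩
  have hGm : Good ξ K m := ⟨x, hx, hcm⟩
  have hcol : |c.1 - c'.1| ≤ 1 := by
    rw [inSq_iff hξ] at hc hc'
    have e1 : (c.1 : ℝ) ≤ c'.1 + 1 := le_trans hc.1.1 hc'.1.2
    have e2 : (c'.1 : ℝ) ≤ c.1 + 1 := le_trans hc'.1.1 hc.1.2
    have e1' : c.1 ≤ c'.1 + 1 := by exact_mod_cast e1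
    have e2' : c'.1 ≤ c.1 + 1 := by exact_mod_cast e2
    rw [abs_le]; omega
  have hrow : |c.2 - c'.2| ≤ 1 := by
    rw [inSq_iff hξ] at hc hc'
    have e1 : (c.2 : ℝ) ≤ c'.2 + 1 := le_trans hc.2.1 hc'.2.2
    have e2 : (c'.2 : ℝ) ≤ c.2 + 1 := le_trans hc'.2.1 hc.2.2
    have e1' : c.2 ≤ c'.2 + 1 := by exact_mod_cast e1
    have e2' : c'.2 ≤ c.2 + 1 := by exact_mod_cast e2
    rw [abs_le]; omega
  refine (step_reach hGc hGm ?_).trans (step_reach hGm hGc' ?_)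
  · simp only [hm]
    simpa using hcol
  · simp only [hm]
    simpa using hrow


variable {ξ : ℝ} {K : Set ℂ} {q : ℂ}

lemma reach_all (hξ : 0 < ξ) (hKconn : IsPreconnected K) (hq : q ∈ K) :
    ∀ x ∈ K, ∀ c, InSq ξ x c → Relation.ReflTransGen (Adj ξ K) (cellOf ξ q) c := by
  classical
  set c₀ := cellOf ξ q with hc₀
  set A : Set ℂ := {x | x ∈ K ∧ ∀ c, InSq ξ x c → Relation.ReflTransGen (Adj ξ K) c₀ c}
    with hA
  have hqA : q ∈ A := ⟨hq, fun c hc => mutual_reach hξ hq c₀ c (inSq_cellOf hξ q) hc⟩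
  -- propagation
  have fwd : ∀ x ∈ A, ∀ y ∈ K, dist y x < del ξ x → y ∈ A := by
    rintro x ⟨hxK, hxA⟩ y hyK hd
    exact ⟨hyK, fun c hc => hxA c (close_inSq hξ x y hd c hc)⟩
  have bwd : ∀ x ∈ K, x ∉ A → ∀ y ∈ K, dist y x < del ξ x → y ∉ A := by
    rintro x hxK hxA y hyK hd hyA
    apply hxA
    refine ⟨hxK, fun c hc => ?_⟩
    have hR' : Relation.ReflTransGen (Adj ξ K) c₀ (cellOf ξ y) :=
      hyA.2 (cellOf ξ y) (inSq_cellOf hξ y)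
    have hx' : InSq ξ x (cellOf ξ y) := close_inSq hξ x y hd _ (inSq_cellOf hξ y)
    exact hR'.trans (mutual_reach hξ hxK _ c hx' hc)
  set U : Set ℂ := ⋃ x ∈ A, Metric.ball x (del ξ x) with hU
  set W : Set ℂ := ⋃ x ∈ K \ A, Metric.ball x (del ξ x) with hW
  have hUopen : IsOpen U := isOpen_biUnion fun _ _ => Metric.isOpen_ball
  have hWopen : IsOpen W := isOpen_biUnion fun _ _ => Metric.isOpen_ball
  have hcov : K ⊆ U ∪ W := by
    intro x hx
    by_cases hxA : x ∈ A
    · exact Or.inl (Set.mem_biUnion hxA (Metric.mem_ball_self (del_pos hξ x)))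
    · exact Or.inr (Set.mem_biUnion ⟨hx, hxA⟩ (Metric.mem_ball_self (del_pos hξ x)))
  have hdisj : K ∩ (U ∩ W) = ∅ := by
    ext y
    simp only [Set.mem_inter_iff, Set.mem_empty_iff_false, iff_false, not_and]
    intro hyK hyU hyW
    rw [hU] at hyU
    rw [hW] at hyW
    obtain ⟨x, hxA, hball⟩ := Set.mem_iUnion₂.1 hyU
    obtain ⟨x', hx'KA, hball'⟩ := Set.mem_iUnion₂.1 hyW
    have hyA : y ∈ A := fwd x hxA y hyK (Metric.mem_ball.1 hball)
    exact absurd hyA (bwd x' hx'KA.1 hx'KA.2 y hyK (Metric.mem_ball.1 hball'))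
  rcases (isPreconnected_iff_subset_of_disjoint.1 hKconn U W hUopen hWopen hcov hdisj) with
    hKU | hKW
  · intro x hxK c hc
    have hxU := hKU hxK
    rw [hU] at hxU
    obtain ⟨x', hx'A, hball⟩ := Set.mem_iUnion₂.1 hxU
    exact (fwd x' hx'A x hxK (Metric.mem_ball.1 hball)).2 c hc
  · exfalso
    have hqW := hKW hq
    rw [hW] at hqW
    obtain ⟨x', hx'KA, hball⟩ := Set.mem_iUnion₂.1 hqW
    exact bwd x' hx'KA.1 hx'KA.2 q hq (Metric.mem_ball.1 hball) hqA

lemma abs_sub_ctr_le {ξ : ℝ} (hξ : 0 < ξ) {x : ℂ} {c : V} (h : InSq ξ x c) :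
    ‖x - ctr ξ c‖ ≤ 2 * ξ := by
  refine le_trans (Complex.norm_le_abs_re_add_abs_im _) ?_
  have h1 : (x - ctr ξ c).re = x.re - (2 * (c.1 : ℝ) + 1) * ξ := by
    rw [Complex.sub_re, ctr_re]
  have h2 : (x - ctr ξ c).im = x.im - (2 * (c.2 : ℝ) + 1) * ξ := by
    rw [Complex.sub_im, ctr_im]
  rw [h1, h2]
  linarith [h.1, h.2]

lemma far_reach (hξ : 0 < ξ) (hKconn : IsPreconnected K)
    (hKunbdd : ¬ Bornology.IsBounded K) (hq : q ∈ K) (M : ℝ) :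
    ∃ c, Relation.ReflTransGen (Adj ξ K) (cellOf ξ q) c ∧ M < ‖ctr ξ c‖ := by
  have : ∃ w ∈ K, M + 2 * ξ < ‖w‖ := by
    by_contra hb
    push_neg at hb
    exact hKunbdd (isBounded_iff_forall_norm_le.2 ⟨M + 2 * ξ, hb⟩)
  obtain ⟨w, hwK, hw⟩ := this
  refine ⟨cellOf ξ w, reach_all hξ hKconn hq w hwK _ (inSq_cellOf hξ w), ?_⟩
  have h1 : ‖w - ctr ξ (cellOf ξ w)‖ ≤ 2 * ξ :=
    abs_sub_ctr_le hξ (inSq_cellOf hξ w)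
  have h2 : ‖w‖ ≤ ‖ctr ξ (cellOf ξ w)‖ + ‖w - ctr ξ (cellOf ξ w)‖ := by
    calc ‖w‖ = ‖ctr ξ (cellOf ξ w) + (w - ctr ξ (cellOf ξ w))‖ := by ring_nf
    _ ≤ _ := norm_add_le _ _
  have hw' : M + 2 * ξ < ‖w‖ := hw
  linarith

lemma reachSet_infinite (hξ : 0 < ξ) (hKconn : IsPreconnected K)
    (hKunbdd : ¬ Bornology.IsBounded K) (hq : q ∈ K) :
    {c : V | Relation.ReflTransGen (Adj ξ K) (cellOf ξ q) c}.Infinite := by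
  intro hfin
  obtain ⟨M, hM⟩ := (hfin.image (fun c => ‖ctr ξ c‖)).bddAbove
  obtain ⟨c, hc, hMlt⟩ := far_reach hξ hKconn hKunbdd hq M
  exact absurd (hM (Set.mem_image_of_mem _ hc)) (not_le.2 hMlt)


section Paths

variable (ξ : ℝ) (K : Set ℂ) (c₀ : V)

/-- A good path: a nonempty self-avoiding list of cells starting at `c₀`,
consecutive cells adjacent (hence all but possibly the first are known good). -/
def GP (l : List V) : Prop :=
  l ≠ [] ∧ l.head? = some c₀ ∧ l.Nodup ∧ l.Chain' (Adj ξ K)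

variable {ξ K c₀}

lemma GP.prefix {l m : List V} (hm : GP ξ K c₀ m) (h : l <+: m) (hne : l ≠ []) :
    GP ξ K c₀ l := by
  obtain ⟨t, rfl⟩ := h
  refine ⟨hne, ?_, hm.2.2.1.sublist (List.sublist_append_left _ _), ?_⟩
  · rw [← hm.2.1, List.head?_append_of_ne_nil _ hne]
  · exact (List.isChain_append.1 hm.2.2.2).1

/-- extend or truncate: reachable cells are endpoints of good paths -/
lemma path_to {c : V} (h : Relation.ReflTransGen (Adj ξ K) c₀ c) :
    ∃ l, GP ξ K c₀ l ∧ l.getLast? = some c := by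
  classical
  induction h with
  | refl => exact ⟨[c₀], ⟨by simp, rfl, List.nodup_singleton _, List.isChain_singleton _⟩, rfl⟩
  | tail hbc hadj ih =>
    rename_i b' c'
    obtain ⟨l, hGP, hlast⟩ := ih
    by_cases hc : c' ∈ l
    · obtain ⟨l₁, l₂, rfl⟩ := List.append_of_mem hc
      refine ⟨l₁ ++ [c'], hGP.prefix ⟨l₂, by simp⟩ (by simp), List.getLast?_concat⟩
    · refine ⟨l ++ [c'], ⟨by simp, ?_, ?_, ?_⟩, List.getLast?_concat⟩
      · rw [← hGP.2.1, List.head?_append_of_ne_nil _ hGP.1]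
      · rw [List.nodup_append]
        exact ⟨hGP.2.2.1, List.nodup_singleton _, fun a ha b hb => by simp at hb; subst hb; rintro rfl; exact hc ha⟩
      · show List.IsChain (Adj ξ K) (l ++ [c'])
        rw [List.isChain_append]
        refine ⟨hGP.2.2.2, List.isChain_singleton _, ?_⟩
        intro x hx y hy
        rw [hlast] at hx
        simp only [List.head?_cons, Option.mem_some_iff] at hx hy
        subst hx
        subst hy
        exact hadj

variable (ξ K c₀) in
/-- The type of good paths, ordered by prefix. -/
def PathT := {l : List V // GP ξ K c₀ l}

instance : PartialOrder (PathT ξ K c₀) where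
  le l m := l.1 <+: m.1
  le_refl l := List.prefix_refl _
  le_trans a b c h1 h2 := List.IsPrefix.trans h1 h2
  le_antisymm a b h1 h2 :=
    Subtype.ext (List.IsPrefix.eq_of_length_le h1 (List.IsPrefix.length_le h2))

lemma PathT.le_def {a b : PathT ξ K c₀} : a ≤ b ↔ a.1 <+: b.1 := Iff.rfl

lemma PathT.length_lt {a b : PathT ξ K c₀} (h : a < b) : a.1.length < b.1.length := by
  have hp : a.1 <+: b.1 := h.le
  rcases lt_or_eq_of_le (List.IsPrefix.length_le hp) with h' | h'
  · exact h'
  · exact absurd (Subtype.ext (List.IsPrefix.eq_of_length hp h')) h.ne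

lemma PathT.take_mem {b : PathT ξ K c₀} {n : ℕ} (hn : 0 < n) :
    GP ξ K c₀ (b.1.take n) :=
  b.2.prefix (List.take_prefix _ _) (by
    have := b.2.1
    rw [← List.length_pos_iff] at this ⊢
    rw [List.length_take]
    omega)

instance : IsStronglyAtomic (PathT ξ K c₀) := by
  constructor
  intro a b hab
  refine ⟨⟨b.1.take (a.1.length + 1), PathT.take_mem (Nat.succ_pos _)⟩, ⟨?_, ?_⟩, ?_⟩
  · -- a < take
    have hlen := PathT.length_lt hab
    have hlen' : (b.1.take (a.1.length + 1)).length = a.1.length + 1 := by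
      rw [List.length_take]; omega
    refine lt_iff_le_not_ge.2 ⟨?_, ?_⟩
    · refine PathT.le_def.2 ?_
      have h1 : a.1 = b.1.take a.1.length := List.prefix_iff_eq_take.1 hab.le
      calc a.1 = b.1.take a.1.length := h1
      _ <+: b.1.take (a.1.length + 1) := List.take_prefix_take_left (by omega)
    · intro hle
      have := List.IsPrefix.length_le (PathT.le_def.1 hle)
      rw [hlen'] at this
      omega
  · -- nothing strictly between
    intro y hy hyx
    have h1 := PathT.length_lt hy
    have h2 := PathT.length_lt hyx
    have hlen := PathT.length_lt hab
    simp only [List.length_take] at h2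
    omega
  · refine PathT.le_def.2 ?_
    exact List.take_prefix _ _

lemma PathT.covby_len {a x : PathT ξ K c₀} (h : a ⋖ x) :
    x.1.length = a.1.length + 1 := by
  have h1 := PathT.length_lt h.lt
  by_contra hne
  have h2 : a.1.length + 1 < x.1.length := by omega
  set m : PathT ξ K c₀ := ⟨x.1.take (a.1.length + 1), PathT.take_mem (Nat.succ_pos _)⟩ with hm
  have hmlen : m.1.length = a.1.length + 1 := by
    simp only [hm, List.length_take]; omega
  refine h.2 (show a < m from ?_) (show m < x from ?_)
  · refine lt_iff_le_not_ge.2 ⟨?_, ?_⟩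
    · refine PathT.le_def.2 ?_
      have h1' : a.1 = x.1.take a.1.length := List.prefix_iff_eq_take.1 h.lt.le
      calc a.1 = x.1.take a.1.length := h1'
      _ <+: x.1.take (a.1.length + 1) := List.take_prefix_take_left (by omega)
    · intro hle
      have := List.IsPrefix.length_le (PathT.le_def.1 hle)
      rw [hmlen] at this
      omega
  · refine lt_iff_le_not_ge.2 ⟨?_, ?_⟩
    · refine PathT.le_def.2 ?_; exact List.take_prefix _ _
    · intro hle
      have := List.IsPrefix.length_le (PathT.le_def.1 hle)
      rw [hmlen] at this
      omega

lemma PathT.covby_eq {a x : PathT ξ K c₀} (h : a ⋖ x) :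
    ∃ v, x.1 = a.1 ++ [v] ∧ (∀ u ∈ a.1.getLast?, Adj ξ K u v) := by
  obtain ⟨t, ht⟩ := h.lt.le
  have hlen := PathT.covby_len h
  have htlen : t.length = 1 := by
    have := congrArg List.length ht
    simp only [List.length_append] at this
    omega
  obtain ⟨v, rfl⟩ : ∃ v, t = [v] := by
    cases t with
    | nil => simp at htlen
    | cons hd tl =>
      simp only [List.length_cons, Nat.succ.injEq] at htlen
      exact ⟨hd, by rw [List.length_eq_zero_iff] at htlen; rw [htlen]⟩
  refine ⟨v, ht.symm, ?_⟩
  intro u hu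
  have hch := x.2.2.2.2
  change List.IsChain (Adj ξ K) x.1 at hch
  rw [← ht, List.isChain_append] at hch
  exact hch.2.2 u hu v (by simp)

end Paths


lemma ctr_inj {ξ : ℝ} (hξ : 0 < ξ) : Function.Injective (ctr ξ) := by
  intro c d h
  have hre := congrArg Complex.re h
  have him := congrArg Complex.im h
  rw [ctr_re, ctr_re] at hre
  rw [ctr_im, ctr_im] at him
  have h1 : (2 * (c.1 : ℝ) + 1) = (2 * (d.1 : ℝ) + 1) :=
    mul_right_cancel₀ (ne_of_gt hξ) hre
  have h2 : (2 * (c.2 : ℝ) + 1) = (2 * (d.2 : ℝ) + 1) :=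
    mul_right_cancel₀ (ne_of_gt hξ) him
  have h1' : c.1 = d.1 := by exact_mod_cast (show (c.1 : ℝ) = d.1 by linarith)
  have h2' : c.2 = d.2 := by exact_mod_cast (show (c.2 : ℝ) = d.2 by linarith)
  exact Prod.ext h1' h2'

lemma ctr_far_finite {ξ : ℝ} (hξ : 0 < ξ) (R : ℝ) :
    {c : V | ‖ctr ξ c‖ < R}.Finite := by
  set N : ℤ := ⌈R / ξ⌉ + 1 with hN
  refine Set.Finite.subset (Set.finite_Icc ((-N, -N) : V) ((N, N) : V)) ?_
  intro c hc
  simp only [Set.mem_setOf_eq] at hc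
  have key : ∀ (a : ℤ), |(2 * (a : ℝ) + 1) * ξ| < R → -N ≤ a ∧ a ≤ N := by
    intro a ha
    have h1 : |(2 * (a : ℝ) + 1)| * ξ < R := by
      rw [← abs_of_pos hξ, ← abs_mul]; exact ha
    have h2 : |(2 * (a : ℝ) + 1)| < R / ξ := by
      rw [lt_div_iff₀ hξ]; exact h1
    have h3 : |2 * (a : ℝ) + 1| < ((N : ℤ) : ℝ) := by
      rw [hN]
      push_cast
      have := Int.le_ceil (R / ξ)
      linarith
    have h4 : |2 * a + 1| < N := by
      exact_mod_cast (show (|(2 * a + 1 : ℤ)| : ℝ) < (N : ℝ) by push_cast; exact h3)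
    rw [abs_lt] at h4
    omega
  have hre : |(2 * (c.1 : ℝ) + 1) * ξ| < R := by
    calc |(2 * (c.1 : ℝ) + 1) * ξ| = |(ctr ξ c).re| := by rw [ctr_re]
    _ ≤ ‖ctr ξ c‖ := Complex.abs_re_le_norm _
    _ < R := hc
  have him : |(2 * (c.2 : ℝ) + 1) * ξ| < R := by
    calc |(2 * (c.2 : ℝ) + 1) * ξ| = |(ctr ξ c).im| := by rw [ctr_im]
    _ ≤ ‖ctr ξ c‖ := Complex.abs_im_le_norm _
    _ < R := hc
  obtain ⟨ha1, ha2⟩ := key c.1 hre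
  obtain ⟨hb1, hb2⟩ := key c.2 him
  exact ⟨⟨ha1, hb1⟩, ⟨ha2, hb2⟩⟩

end LatticeShadow

open LatticeShadow

/-- Lemma 4.22 of the paper, in abstract form: any connected unbounded set `K ⊆ ℂ` can be
shadowed, starting near any of its points `q`, by an infinite self-avoiding
nearest-neighbor path on the shifted lattice `Λ′ = {(2a+1)ξ + (2b+1)ξ·i}` each of whose
mesh squares meets `K`, and which escapes to infinity. -/
theorem lattice_path_shadowing
    (ξ : ℝ) (hξ : 0 < ξ) (K : Set ℂ) (hKconn : IsPreconnected K)
    (hKunbdd : ¬ Bornology.IsBounded K) (q : ℂ) (hq : q ∈ K) :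
    ∃ z : ℕ → ℂ,
      Function.Injective z ∧
      (∀ k, ∃ a b : ℤ, z k = (((2 * (a : ℝ) + 1) * ξ : ℝ) : ℂ) +
        (((2 * (b : ℝ) + 1) * ξ : ℝ) : ℂ) * Complex.I) ∧
      ‖z 0 - q‖ ≤ 2 * ξ ∧
      (∀ k, z (k + 1) - z k ∈
        ({((2 * ξ : ℝ) : ℂ), ((-(2 * ξ) : ℝ) : ℂ),
          ((2 * ξ : ℝ) : ℂ) * Complex.I, ((-(2 * ξ) : ℝ) : ℂ) * Complex.I} : Set ℂ)) ∧
      (∀ k, ∃ w ∈ K, |(w - z k).re| ≤ ξ ∧ |(w - z k).im| ≤ ξ) ∧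
      Tendsto (fun k => ‖z k‖) atTop atTop := by
  classical
  set c₀ : V := cellOf ξ q with hc₀
  have hGc₀ : Good ξ K c₀ := ⟨q, hq, inSq_cellOf hξ q⟩
  set b : PathT ξ K c₀ := ⟨[c₀], by simp, rfl, List.nodup_singleton _, List.isChain_singleton _⟩
    with hb
  -- covers are finite
  have hfin : ∀ a : PathT ξ K c₀, {x | a ⋖ x}.Finite := by
    intro a
    set u : V := a.1.getLast a.2.1 with hu
    have hgl : a.1.getLast? = some u := List.getLast?_eq_getLast_of_ne_nil a.2.1
    have himg : (fun x : PathT ξ K c₀ => x.1.getLast?) '' {x | a ⋖ x} ⊆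
        Option.some '' (Set.Icc (u - (1, 1)) (u + (1, 1))) := by
      rintro o ⟨x, hx, rfl⟩
      obtain ⟨v, hxv, hadj⟩ := PathT.covby_eq hx
      have hAdj : Adj ξ K u v := hadj u hgl
      obtain ⟨_, _, habs⟩ := hAdj
      have h1 := abs_nonneg (u.1 - v.1)
      have h2 := abs_nonneg (u.2 - v.2)
      have h3 := abs_le.1 (le_of_eq (rfl : |u.1 - v.1| = |u.1 - v.1|))
      have habs1 := abs_choice (u.1 - v.1)
      have habs2 := abs_choice (u.2 - v.2)
      refine ⟨v, ⟨⟨?_, ?_⟩, ⟨?_, ?_⟩⟩, ?_⟩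
      · show u.1 - 1 ≤ v.1; omega
      · show u.2 - 1 ≤ v.2; omega
      · show v.1 ≤ u.1 + 1; omega
      · show v.2 ≤ u.2 + 1; omega
      · show some v = (x.1).getLast?
        rw [hxv, List.getLast?_concat]
    have hinjOn : Set.InjOn (fun x : PathT ξ K c₀ => x.1.getLast?) {x | a ⋖ x} := by
      intro x hx y hy hxy
      obtain ⟨v, hxv, _⟩ := PathT.covby_eq hx
      obtain ⟨v', hyv, _⟩ := PathT.covby_eq hy
      simp only at hxy
      rw [hxv, hyv, List.getLast?_concat, List.getLast?_concat] at hxy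
      have : v = v' := Option.some.inj hxy
      exact Subtype.ext (by rw [hxv, hyv, this])
    exact Set.Finite.of_finite_image
      (Set.Finite.subset ((Set.finite_Icc _ _).image Option.some) himg) hinjOn
  -- infinitely many good paths
  have hbinf : (Set.Ici b).Infinite := by
    have hsel : ∀ c : V, Relation.ReflTransGen (Adj ξ K) c₀ c →
        ∃ l : PathT ξ K c₀, l.1.getLast? = some c ∧ b ≤ l := by
      intro c hc
      obtain ⟨l, hGP, hl⟩ := path_to hc
      refine ⟨⟨l, hGP⟩, hl, ?_⟩
      refine PathT.le_def.2 ?_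
      cases l with
      | nil => exact absurd rfl hGP.1
      | cons hd tl =>
        have hhd : hd = c₀ := by
          have := hGP.2.1
          simp only [List.head?_cons, Option.some.injEq] at this
          exact this
        subst hhd
        exact ⟨tl, rfl⟩
    choose F hF1 hF2 using hsel
    refine Set.infinite_of_injOn_mapsTo (f := fun c =>
        if h : Relation.ReflTransGen (Adj ξ K) c₀ c then F c h else b) ?_ ?_
        (reachSet_infinite hξ hKconn hKunbdd hq)
    · intro c hc c' hc' hcc
      simp only [Set.mem_setOf_eq] at hc hc'
      rw [← hc₀] at hc hc'
      simp only [dif_pos hc, dif_pos hc'] at hcc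
      have := congrArg (fun l : PathT ξ K c₀ => l.1.getLast?) hcc
      simp only [hF1 c hc, hF1 c' hc'] at this
      exact Option.some.inj this
    · intro c hc
      simp only [Set.mem_setOf_eq] at hc
      rw [← hc₀] at hc
      simp only [Set.mem_Ici, dif_pos hc]
      exact hF2 c hc
  obtain ⟨f, hf0, hfc⟩ := exists_seq_covby_of_forall_covby_finite hfin hbinf
  -- basic structure of the sequence of paths
  have hlen : ∀ k, (f k).1.length = k + 1 := by
    intro k
    induction k with
    | zero => rw [hf0]; rfl
    | succ n ih => rw [PathT.covby_len (hfc n), ih]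
  set w : ℕ → V := fun k => (f k).1.getLast (f k).2.1 with hwdef
  have hlast : ∀ k, (f k).1.getLast? = some (w k) :=
    fun k => List.getLast?_eq_getLast_of_ne_nil _
  have hext : ∀ k, (f (k + 1)).1 = (f k).1 ++ [w (k + 1)] ∧ Adj ξ K (w k) (w (k + 1)) := by
    intro k
    obtain ⟨v, hv, hadj⟩ := PathT.covby_eq (hfc k)
    have hveq : v = w (k + 1) := by
      have h1 := hlast (k + 1)
      rw [hv, List.getLast?_concat] at h1
      exact Option.some.inj h1.symm |>.symm
    rw [hveq] at hv hadj
    exact ⟨hv, hadj (w k) (hlast k)⟩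
  have hmono : ∀ j k, j ≤ k → (f j).1 <+: (f k).1 := by
    intro j k hjk
    induction k, hjk using Nat.le_induction with
    | base => exact List.prefix_refl _
    | succ n _ ih => exact ih.trans (PathT.le_def.1 (hfc n).lt.le)
  have helem : ∀ j k, j ≤ k → (f k).1[j]? = some (w j) := by
    intro j k hjk
    have hpre := hmono j k hjk
    have htake : (f j).1 = (f k).1.take ((f j).1.length) := List.prefix_iff_eq_take.1 hpre
    have e1 : (f k).1[j]? = (f j).1[j]? := by
      rw [htake, hlen j, List.getElem?_take_of_lt (by omega)]
    rw [e1]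
    calc (f j).1[j]? = (f j).1[((f j).1.length) - 1]? := by rw [hlen j]; norm_num
    _ = (f j).1.getLast? := List.getLast?_eq_getElem?.symm
    _ = some (w j) := hlast j
  have hwinj : Function.Injective w := by
    intro i j hij
    rcases Nat.le_total i j with h | h
    · have e1 := helem i j h
      have e2 := helem j j (le_refl j)
      rw [hij] at e1
      exact (List.getElem?_inj (by rw [hlen]; omega) (f j).2.2.2.1).1 (e1.trans e2.symm)
    · have e1 := helem j i h
      have e2 := helem i i (le_refl i)
      rw [← hij] at e1
      exact ((List.getElem?_inj (by rw [hlen]; omega) (f i).2.2.2.1).1 (e1.trans e2.symm)).symm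
  have hw0 : w 0 = c₀ := by
    have h1 := hlast 0
    rw [hf0] at h1
    have h1' : (some c₀ : Option V) = some (w 0) := h1
    exact (Option.some.inj h1').symm
  have hGood : ∀ k, Good ξ K (w k) := by
    intro k
    cases k with
    | zero => rw [hw0]; exact hGc₀
    | succ n => exact (hext n).2.2.1
  refine ⟨fun k => ctr ξ (w k), ?_, ?_, ?_, ?_, ?_, ?_⟩
  · exact (ctr_inj hξ).comp hwinj
  · intro k
    exact ⟨(w k).1, (w k).2, rfl⟩
  · show ‖ctr ξ (w 0) - q‖ ≤ 2 * ξ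
    rw [hw0]
    rw [← norm_neg, neg_sub]
    exact abs_sub_ctr_le hξ (inSq_cellOf hξ q)
  · intro k
    obtain ⟨_, habs⟩ := (hext k).2.2
    set c := w k
    set d := w (k + 1)
    have habs1 := abs_choice (c.1 - d.1)
    have habs2 := abs_choice (c.2 - d.2)
    have hn1 := abs_nonneg (c.1 - d.1)
    have hn2 := abs_nonneg (c.2 - d.2)
    have hcase : (d.1 = c.1 + 1 ∧ d.2 = c.2) ∨ (d.1 = c.1 - 1 ∧ d.2 = c.2) ∨
        (d.2 = c.2 + 1 ∧ d.1 = c.1) ∨ (d.2 = c.2 - 1 ∧ d.1 = c.1) := by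
      rcases habs1 with h | h <;> rcases habs2 with h' | h' <;> omega
    rcases hcase with ⟨h1, h2⟩ | ⟨h1, h2⟩ | ⟨h1, h2⟩ | ⟨h1, h2⟩
    · have heq : ctr ξ d - ctr ξ c = ((2 * ξ : ℝ) : ℂ) := by
        simp only [ctr, h1, h2]
        push_cast
        ring
      rw [heq]; left; rfl
    · have heq : ctr ξ d - ctr ξ c = ((-(2 * ξ) : ℝ) : ℂ) := by
        simp only [ctr, h1, h2]
        push_cast
        ring
      rw [heq]; right; left; rfl
    · have heq : ctr ξ d - ctr ξ c = ((2 * ξ : ℝ) : ℂ) * Complex.I := by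
        simp only [ctr, h1, h2]
        push_cast
        ring
      rw [heq]; right; right; left; rfl
    · have heq : ctr ξ d - ctr ξ c = ((-(2 * ξ) : ℝ) : ℂ) * Complex.I := by
        simp only [ctr, h1, h2]
        push_cast
        ring
      rw [heq]; right; right; right; rfl
  · intro k
    obtain ⟨x, hxK, h1, h2⟩ := hGood k
    exact ⟨x, hxK, by rw [Complex.sub_re, ctr_re]; exact h1,
      by rw [Complex.sub_im, ctr_im]; exact h2⟩
  · rw [tendsto_atTop]
    intro R
    have hfinR : {c : V | ‖ctr ξ c‖ < R}.Finite := ctr_far_finite hξ R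
    have hpre : {k : ℕ | w k ∈ {c : V | ‖ctr ξ c‖ < R}}.Finite :=
      hfinR.preimage hwinj.injOn
    have := hpre.eventually_cofinite_notMem
    rw [Nat.cofinite_eq_atTop] at this
    filter_upwards [this] with k hk
    simp only [Set.mem_setOf_eq, not_lt] at hk
    exact hk
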